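/- Let G be a group with abelian normal subgroup K and quotient map ρ : G → Q = G/K. Suppose u ∈ G \ K has finite conjugacy class in G. Then ρ(u) is a nontrivial element of FC(Q), and either some nontrivial element of K has finite conjugacy class in G, or u commutes with every element of K. -/

import Mathlib

open Pointwise


theorem finite_class_outside_abelian_normal {G : Type*} [Group G]
    (K : Subgroup G) [K.Normal] (hab : ∀ a b : K, a * b = b * a)
    (u : G) (hu : u ∉ K) (hfin : {x : G | IsConj u x}.Finite) :
    ((QuotientGroup.mk u : G ⧸ K) ≠ 1 ∧
      {r : G ⧸ K | IsConj (QuotientGroup.mk u : G ⧸ K) r}.Finite) ∧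
    ((∃ k : G, k ∈ K ∧ k ≠ 1 ∧ {x : G | IsConj k x}.Finite) ∨
      ∀ k ∈ K, Commute u k) := by
  constructor
  · constructor
    · intro h
      exact hu ((QuotientGroup.eq_one_iff u).mp h)
    · have hsub : {r : G ⧸ K | IsConj (QuotientGroup.mk u : G ⧸ K) r} ⊆
          (QuotientGroup.mk : G → G ⧸ K) '' {x : G | IsConj u x} := by
        intro r hr
        obtain ⟨q, hq⟩ := isConj_iff.mp hr
        obtain ⟨g, rfl⟩ := QuotientGroup.mk_surjective q
        refine ⟨g * u * g⁻¹, isConj_iff.mpr ⟨g, rfl⟩, ?_⟩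
        simpa using hq
      exact ((hfin.image _).subset hsub)
  · by_cases hc : ∀ k ∈ K, Commute u k
    · exact Or.inr hc
    · push_neg at hc
      obtain ⟨k, hk, hcom⟩ := hc
      refine Or.inl ⟨u⁻¹ * k⁻¹ * u * k, ?_, ?_, ?_⟩
      · have h1 : u⁻¹ * k⁻¹ * u ∈ K := by
          have := Subgroup.Normal.conj_mem ‹K.Normal› k⁻¹ (inv_mem hk) u⁻¹
          simpa [mul_assoc] using this
        exact mul_mem h1 hk
      · intro h
        exact hcom (by
          have := congrArg (fun x => k * u * x) h
          exact (show u * k = k * u by simpa [mul_assoc] using this))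
      · have hsub : {x : G | IsConj (u⁻¹ * k⁻¹ * u * k) x} ⊆
            {x : G | IsConj u x}⁻¹ * {x : G | IsConj u x} := by
          intro x hx
          obtain ⟨g, hg⟩ := isConj_iff.mp hx
          refine ⟨(g * u * g⁻¹)⁻¹, Set.inv_mem_inv.mpr (isConj_iff.mpr ⟨g, rfl⟩),
            (g * k⁻¹) * u * (g * k⁻¹)⁻¹, isConj_iff.mpr ⟨g * k⁻¹, rfl⟩, ?_⟩
          rw [← hg]
          group
        exact (hfin.inv.mul hfin).subset hsub
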